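/- For every coset spectral system and for all (i, α, x) ∈ I × A × X one has M(i, α, x) = Σ_{j∈I} Σ_{β∈A} Σ_{y∈X} S_{ij} · conj(Ṡ_{αβ}) · conj(S̈_{xy}) · M(j, β, y). -/

import Mathlib

open scoped BigOperators

/-- A modular datum `(I, S, ω, C)`: the genus-zero modular matrices data of §2.1. -/
structure ModularDatum (I : Type*) [Fintype I] [DecidableEq I] : Type _ where
  one : I
  bar : I → I
  bar_invol : Function.Involutive bar
  bar_one : bar one = one
  S : Matrix I I ℂ
  S_symm : ∀ i j, S i j = S j i
  S_unitary : S ∈ Matrix.unitaryGroup I ℂ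
  S_one_im : ∀ i, (S one i).im = 0
  S_one_pos : ∀ i, 0 < (S one i).re
  ω : I → ℂ
  ω_abs : ∀ i, ‖ω i‖ = 1
  ω_one : ω one = 1
  ω_bar : ∀ i, ω (bar i) = ω i
  C : ℂ
  C_abs : ‖C‖ = 1
  rel_STS : (S * Matrix.diagonal (fun i => C * ω i)) ^ 3 = S ^ 2
  rel_Ssq : ∀ i j, (S ^ 2) i j = if j = bar i then 1 else 0

/-- A coset spectral system: three modular data `(I,S,ω,C)`, `(A,Ṡ,ω̇,Ċ)`, `(X,S̈,ω̈,C̈)`,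
a nonnegative function `M` on `I × A × X` with `M(1,1,1) = 1`, and a finite spectral index
set `E` with maps `k, δ, ζ` and nonnegative weights `p`, satisfying the conclusions (a)–(d)
of Lemma A of §3.1 of the paper. -/
structure CosetSpectralSystem (I A X E : Type*)
    [Fintype I] [DecidableEq I] [Fintype A] [DecidableEq A]
    [Fintype X] [DecidableEq X] [Fintype E] : Type _ where
  G : ModularDatum I
  H : ModularDatum A
  Q : ModularDatum X
  M : I → A → X → ℝ
  M_nonneg : ∀ i α x, 0 ≤ M i α x
  M_vac : M G.one H.one Q.one = 1
  k : E → I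
  δ : E → A
  ζ : E → X
  p : E → ℝ
  p_nonneg : ∀ e, 0 ≤ p e
  spec : ∀ i α x, (M i α x : ℂ) =
    ∑ e, (G.S (G.bar i) (k e) / G.S G.one (k e)) *
         (H.S α (δ e) / H.S H.one (δ e)) *
         (Q.S x (ζ e) / Q.S Q.one (ζ e)) * (p e : ℂ)
  vac_node : ∃ e₀, k e₀ = G.one ∧ δ e₀ = H.one ∧ ζ e₀ = Q.one ∧ 0 < p e₀
  phase : ∀ j β y, M j β y ≠ 0 → Q.ω y = G.ω j * (H.ω β)⁻¹
  norm_one : ∑ j, ∑ β, ∑ y,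
    G.S G.one j * star (H.S H.one β) * star (Q.S Q.one y) * (M j β y : ℂ) = 1


namespace ModularDatum
variable {I : Type*} [Fintype I] [DecidableEq I] (D : ModularDatum I)

lemma orth (i j : I) : (∑ l, D.S i l * star (D.S j l)) = if i = j then 1 else 0 := by
  have h : D.S * star D.S = 1 := Matrix.mem_unitaryGroup_iff.mp D.S_unitary
  have h2 : (D.S * star D.S) i j = (1 : Matrix I I ℂ) i j := by rw [h]
  simpa [Matrix.mul_apply, Matrix.star_apply, Matrix.one_apply] using h2

lemma orth' (i j : I) : (∑ l, star (D.S i l) * D.S l j) = if i = j then 1 else 0 := by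
  have h : star D.S * D.S = 1 := Matrix.mem_unitaryGroup_iff'.mp D.S_unitary
  have h2 : (star D.S * D.S) i j = (1 : Matrix I I ℂ) i j := by rw [h]
  simp only [Matrix.mul_apply, Matrix.star_apply, Matrix.one_apply] at h2
  rw [← h2]
  exact Finset.sum_congr rfl fun l _ => by rw [D.S_symm i l]

lemma orth'' (i j : I) : (∑ l, D.S i l * star (D.S l j)) = if i = j then 1 else 0 := by
  rw [← D.orth i j]
  exact Finset.sum_congr rfl fun l _ => by rw [D.S_symm l j]

lemma Ssq (i j : I) : (∑ l, D.S i l * D.S l j) = if j = D.bar i then 1 else 0 := by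
  have := D.rel_Ssq i j
  rwa [pow_two, Matrix.mul_apply] at this

lemma sq_apply (a b : I) : (D.S * D.S) a b = if b = D.bar a then 1 else 0 := by
  rw [← pow_two]; exact D.rel_Ssq a b

lemma Ssq_star (i j : I) :
    (∑ l, star (D.S i l) * star (D.S l j)) = if j = D.bar i then 1 else 0 := by
  have := congrArg star (D.Ssq i j)
  rw [star_sum] at this
  simpa [star_mul', apply_ite (star : ℂ → ℂ)] using this

lemma bar_row (i j : I) : D.S (D.bar i) j = star (D.S i j) := by
  have hJ : (D.S * D.S) * (D.S * D.S) = 1 := by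
    ext a b
    rw [Matrix.mul_apply]
    simp only [D.sq_apply, ite_mul, one_mul, zero_mul]
    simp [Finset.sum_ite_eq', Matrix.one_apply, D.bar_invol a, eq_comm]
  have h1 : D.S * star D.S = 1 := Matrix.mem_unitaryGroup_iff.mp D.S_unitary
  have hstar : star D.S = D.S * D.S * D.S := by
    calc star D.S = ((D.S * D.S) * (D.S * D.S)) * star D.S := by rw [hJ, one_mul]
    _ = (D.S * D.S * D.S) * (D.S * star D.S) := by simp only [mul_assoc]
    _ = D.S * D.S * D.S := by rw [h1, mul_one]
  have h2 : star (D.S) i j = (D.S * D.S * D.S) i j := by rw [← hstar]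
  rw [Matrix.star_apply, Matrix.mul_apply] at h2
  simp only [D.sq_apply, ite_mul, one_mul, zero_mul] at h2
  rw [Finset.sum_ite_eq' Finset.univ (D.bar i) (fun k => D.S k j)] at h2
  simp only [Finset.mem_univ, if_true] at h2
  rw [← h2, D.S_symm j i]

lemma col_bar (i j : I) : D.S i (D.bar j) = star (D.S i j) := by
  rw [D.S_symm i (D.bar j), D.bar_row j i, D.S_symm j i]

lemma TSTST :
    (Matrix.diagonal (fun l => D.C * D.ω l)) * D.S * (Matrix.diagonal (fun l => D.C * D.ω l))
      * D.S * (Matrix.diagonal (fun l => D.C * D.ω l)) = D.S := by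
  set T := Matrix.diagonal (fun l => D.C * D.ω l) with hT
  have h3 : D.S * (T * D.S * T * D.S * T) = D.S * D.S := by
    have h := D.rel_STS
    rw [pow_succ, pow_two, pow_two] at h
    calc D.S * (T * D.S * T * D.S * T) = (D.S * T) * (D.S * T) * (D.S * T) := by
          simp only [mul_assoc]
    _ = D.S * D.S := h
  have h1 : star D.S * D.S = 1 := Matrix.mem_unitaryGroup_iff'.mp D.S_unitary
  calc T * D.S * T * D.S * T = (star D.S * D.S) * (T * D.S * T * D.S * T) := by
        rw [h1, one_mul]
  _ = star D.S * (D.S * (T * D.S * T * D.S * T)) := by simp only [mul_assoc]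
  _ = star D.S * (D.S * D.S) := by rw [h3]
  _ = (star D.S * D.S) * D.S := by simp only [mul_assoc]
  _ = D.S := by rw [h1, one_mul]

lemma row_expand (i j : I) :
    D.S i j = (D.C * D.ω i) * (∑ l, (D.S i l * (D.C * D.ω l)) * D.S l j) * (D.C * D.ω j) := by
  have h : Matrix.diagonal (fun l => D.C * D.ω l) * D.S * Matrix.diagonal (fun l => D.C * D.ω l)
      * D.S * Matrix.diagonal (fun l => D.C * D.ω l) = D.S := D.TSTST
  have h2 := congrArg (fun (M : Matrix I I ℂ) => M i j) h
  simp only [Matrix.mul_apply, Matrix.diagonal_apply, ite_mul, mul_ite, zero_mul, mul_zero,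
    Finset.sum_ite_eq, Finset.sum_ite_eq', Finset.mem_univ, if_true] at h2
  rw [← h2]
  simp only [Finset.mul_sum, Finset.sum_mul]
  exact Finset.sum_congr rfl fun l _ => by ring

lemma row_expand_star (i j : I) :
    star (D.S i j) = star (D.C * D.ω i) *
      (∑ l, (star (D.S i l) * star (D.C * D.ω l)) * star (D.S l j)) * star (D.C * D.ω j) := by
  rw [congrArg star (D.row_expand i j)]
  simp only [star_mul', star_sum]

lemma S_one_real (j : I) : D.S D.one j = (((D.S D.one j).re : ℝ) : ℂ) := by
  apply Complex.ext <;> simp [D.S_one_im j]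

end ModularDatum

lemma unimod_mul_star {z : ℂ} (h : ‖z‖ = 1) : z * star z = 1 := by
  rw [Complex.star_def, Complex.mul_conj, Complex.normSq_eq_norm_sq, h]
  norm_num

lemma eq_one_of_abs_re {z : ℂ} (h1 : ‖z‖ = 1) (h2 : z.re = 1) : z = 1 := by
  have hsq := Complex.sq_norm z
  rw [h1] at hsq
  have h3 : z.re * z.re + z.im * z.im = 1 := by
    simpa [Complex.normSq_apply] using hsq.symm
  have h4 : z.im = 0 := by nlinarith [sq_nonneg z.im]
  exact Complex.ext (by simpa using h2) (by simpa using h4)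

section Sums
variable {I A X υ : Type*} [Fintype I] [Fintype A] [Fintype X] [Fintype υ]

lemma sum2_factor {B C : Type*} [Fintype B] [Fintype C] (F : B → ℂ) (G : C → ℂ) :
    (∑ t : B × C, F t.1 * G t.2) = (∑ b, F b) * (∑ c, G c) := by
  rw [Finset.sum_mul_sum, Fintype.sum_prod_type]

lemma sum3_factor (F₁ : I → ℂ) (F₂ : A → ℂ) (F₃ : X → ℂ) :
    ∑ t : I × A × X, F₁ t.1 * F₂ t.2.1 * F₃ t.2.2
      = (∑ j, F₁ j) * (∑ β, F₂ β) * (∑ y, F₃ y) := by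
  calc ∑ t : I × A × X, F₁ t.1 * F₂ t.2.1 * F₃ t.2.2
      = ∑ t : I × A × X, F₁ t.1 * ((fun p : A × X => F₂ p.1 * F₃ p.2) t.2) :=
        Finset.sum_congr rfl fun t _ => by ring
  _ = (∑ j, F₁ j) * (∑ p : A × X, F₂ p.1 * F₃ p.2) :=
        sum2_factor F₁ (fun p : A × X => F₂ p.1 * F₃ p.2)
  _ = (∑ j, F₁ j) * ((∑ β, F₂ β) * (∑ y, F₃ y)) := by rw [sum2_factor]
  _ = _ := by ring

lemma contract3 (f₁ : I → ℂ) (f₂ : A → ℂ) (f₃ : X → ℂ)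
    (g₁ : I → υ → ℂ) (g₂ : A → υ → ℂ) (g₃ : X → υ → ℂ) (W : υ → ℂ) :
    (∑ t : I × A × X, (f₁ t.1 * f₂ t.2.1 * f₃ t.2.2) *
        (∑ u, g₁ t.1 u * g₂ t.2.1 u * g₃ t.2.2 u * W u))
      = ∑ u, (∑ j, f₁ j * g₁ j u) * (∑ β, f₂ β * g₂ β u) * (∑ y, f₃ y * g₃ y u) * W u := by
  have key : ∀ t : I × A × X, (f₁ t.1 * f₂ t.2.1 * f₃ t.2.2) *
        (∑ u, g₁ t.1 u * g₂ t.2.1 u * g₃ t.2.2 u * W u)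
      = ∑ u, ((f₁ t.1 * g₁ t.1 u) * (f₂ t.2.1 * g₂ t.2.1 u) * (f₃ t.2.2 * g₃ t.2.2 u)) * W u := by
    intro t; rw [Finset.mul_sum]; exact Finset.sum_congr rfl fun u _ => by ring
  rw [Finset.sum_congr rfl fun t _ => key t, Finset.sum_comm]
  refine Finset.sum_congr rfl fun u _ => ?_
  rw [← Finset.sum_mul,
    sum3_factor (fun j => f₁ j * g₁ j u) (fun β => f₂ β * g₂ β u) (fun y => f₃ y * g₃ y u)]

variable [DecidableEq I] [DecidableEq A] [DecidableEq X]

lemma sum_ite3 (v : I × A × X) (W : I × A × X → ℂ) :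
    ∑ u : I × A × X, (if u.1 = v.1 then (1:ℂ) else 0) * (if u.2.1 = v.2.1 then 1 else 0)
      * (if u.2.2 = v.2.2 then 1 else 0) * W u = W v := by
  rw [Fintype.sum_prod_type]
  simp only [ite_mul, one_mul, zero_mul]
  rw [Finset.sum_eq_single v.1]
  · rw [Fintype.sum_prod_type, Finset.sum_eq_single v.2.1]
    · rw [Finset.sum_eq_single v.2.2]
      · simp
      · intro y _ hy; simp [hy]
      · simp
    · intro β _ hβ; simp [hβ]
    · simp
  · intro j _ hj; simp [hj]
  · simp

lemma sum_ite3' (v : I × A × X) (W : I × A × X → ℂ) :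
    ∑ u : I × A × X, (if v.1 = u.1 then (1:ℂ) else 0) * (if v.2.1 = u.2.1 then 1 else 0)
      * (if v.2.2 = u.2.2 then 1 else 0) * W u = W v := by
  rw [← sum_ite3 v W]
  refine Finset.sum_congr rfl fun u _ => ?_
  simp [eq_comm]

end Sums

namespace CSSaux
variable {I A X E : Type*}
    [Fintype I] [DecidableEq I] [Fintype A] [DecidableEq A]
    [Fintype X] [DecidableEq X] [Fintype E]
    (S : CosetSpectralSystem I A X E)

noncomputable def Vk (s t : I × A × X) : ℂ :=
  S.G.S s.1 t.1 * star (S.H.S s.2.1 t.2.1) * star (S.Q.S s.2.2 t.2.2)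

noncomputable def Mv (s : I × A × X) : ℂ := (S.M s.1 s.2.1 s.2.2 : ℂ)

noncomputable def Nv (s : I × A × X) : ℂ := ∑ t, Vk S s t * Mv S t

noncomputable def tv (s : I × A × X) : ℂ :=
  (S.G.C * S.G.ω s.1) * star (S.H.C * S.H.ω s.2.1) * star (S.Q.C * S.Q.ω s.2.2)

def onev : I × A × X := (S.G.one, S.H.one, S.Q.one)

def barv (s : I × A × X) : I × A × X := (S.G.bar s.1, S.H.bar s.2.1, S.Q.bar s.2.2)

noncomputable def cc : ℂ := S.G.C * star S.H.C * star S.Q.C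

lemma abs_tv (s : I × A × X) : ‖tv S s‖ = 1 := by
  simp [tv, norm_mul, Complex.star_def, Complex.norm_conj,
    S.G.C_abs, S.H.C_abs, S.Q.C_abs, S.G.ω_abs, S.H.ω_abs, S.Q.ω_abs]

lemma abs_cc : ‖cc S‖ = 1 := by
  simp [cc, norm_mul, Complex.star_def, Complex.norm_conj, S.G.C_abs, S.H.C_abs, S.Q.C_abs]

lemma phase_lemma (s : I × A × X) : tv S s * Mv S s = cc S * Mv S s := by
  by_cases h : S.M s.1 s.2.1 s.2.2 = 0
  · simp [Mv, h]
  · have hph := S.phase _ _ _ h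
    have h1 : S.G.ω s.1 * star (S.G.ω s.1) = 1 := unimod_mul_star (S.G.ω_abs _)
    have h2 : star (S.H.ω s.2.1) ≠ 0 := by
      intro h0
      have := S.H.ω_abs s.2.1
      rw [star_eq_zero] at h0
      rw [h0] at this
      simp at this
    have h2' : star (S.H.ω s.2.1) * (star (S.H.ω s.2.1))⁻¹ = 1 := mul_inv_cancel₀ h2
    have htv : tv S s = cc S := by
      have expand : tv S s = (S.G.C * star S.H.C * star S.Q.C)
          * (S.G.ω s.1 * star (S.G.ω s.1))
          * (star (S.H.ω s.2.1) * (star (S.H.ω s.2.1))⁻¹) := by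
        rw [tv, hph]
        simp only [star_mul', star_inv₀]
        ring
      rw [expand, h1, h2', mul_one, mul_one, cc]
    rw [htv]

lemma tv_one : tv S (onev S) = cc S := by
  simp [tv, onev, cc, S.G.ω_one, S.H.ω_one, S.Q.ω_one]

lemma tv_bar (s : I × A × X) : tv S (barv S s) = tv S s := by
  simp only [tv, barv, S.G.ω_bar, S.H.ω_bar, S.Q.ω_bar]

lemma Nv_triple (i : I) (α : A) (x : X) :
    Nv S (i, α, x) = ∑ j, ∑ β, ∑ y,
      S.G.S i j * star (S.H.S α β) * star (S.Q.S x y) * (S.M j β y : ℂ) := by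
  rw [Nv]
  simp only [Fintype.sum_prod_type]
  rfl

lemma Nv_one : Nv S (onev S) = 1 := by
  rw [onev, Nv_triple]
  exact S.norm_one

lemma barv_involutive : Function.Involutive (barv S) := by
  intro s
  simp only [barv, S.G.bar_invol s.1, S.H.bar_invol s.2.1, S.Q.bar_invol s.2.2]

lemma VN_eq (s : I × A × X) : (∑ t, Vk S s t * Nv S t) = Mv S (barv S s) := by
  have h := contract3 (fun j => S.G.S s.1 j) (fun β => star (S.H.S s.2.1 β))
    (fun y => star (S.Q.S s.2.2 y)) (fun j u => S.G.S j u.1)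
    (fun β u => star (S.H.S β u.2.1)) (fun y u => star (S.Q.S y u.2.2)) (Mv S)
  have hL : (∑ t, Vk S s t * Nv S t)
      = ∑ t : I × A × X, ((fun j => S.G.S s.1 j) t.1 * (fun β => star (S.H.S s.2.1 β)) t.2.1
          * (fun y => star (S.Q.S s.2.2 y)) t.2.2) *
        (∑ u, (fun j u => S.G.S j u.1) t.1 u * (fun β u => star (S.H.S β u.2.1)) t.2.1 u
          * (fun y u => star (S.Q.S y u.2.2)) t.2.2 u * Mv S u) := rfl
  rw [hL, h]
  have hc : ∀ u : I × A × X,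
      (∑ j, S.G.S s.1 j * S.G.S j u.1) * (∑ β, star (S.H.S s.2.1 β) * star (S.H.S β u.2.1))
        * (∑ y, star (S.Q.S s.2.2 y) * star (S.Q.S y u.2.2)) * Mv S u
      = (if u.1 = (barv S s).1 then (1:ℂ) else 0) * (if u.2.1 = (barv S s).2.1 then 1 else 0)
        * (if u.2.2 = (barv S s).2.2 then 1 else 0) * Mv S u := by
    intro u
    rw [S.G.Ssq s.1 u.1, S.H.Ssq_star s.2.1 u.2.1, S.Q.Ssq_star s.2.2 u.2.2]
    rfl
  rw [Finset.sum_congr rfl fun u _ => hc u, sum_ite3]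

lemma Nv_real (t : I × A × X) : ∃ r : ℝ, 0 ≤ r ∧ Nv S t = (r : ℂ) := by
  refine ⟨∑ e, if t.1 = S.k e ∧ t.2.1 = S.δ e ∧ t.2.2 = S.ζ e then
      S.p e * (((S.G.S S.G.one (S.k e)).re)⁻¹ * ((S.H.S S.H.one (S.δ e)).re)⁻¹
        * ((S.Q.S S.Q.one (S.ζ e)).re)⁻¹) else 0, ?_, ?_⟩
  · refine Finset.sum_nonneg fun e _ => ?_
    split
    · refine mul_nonneg (S.p_nonneg e) ?_
      have a1 := S.G.S_one_pos (S.k e)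
      have a2 := S.H.S_one_pos (S.δ e)
      have a3 := S.Q.S_one_pos (S.ζ e)
      positivity
    · exact le_refl 0
  · have hMv : ∀ u : I × A × X, Mv S u = ∑ e,
        (S.G.S (S.G.bar u.1) (S.k e) / S.G.S S.G.one (S.k e)) *
        (S.H.S u.2.1 (S.δ e) / S.H.S S.H.one (S.δ e)) *
        (S.Q.S u.2.2 (S.ζ e) / S.Q.S S.Q.one (S.ζ e)) * (S.p e : ℂ) :=
      fun u => S.spec u.1 u.2.1 u.2.2
    have h0 : Nv S t = ∑ u : I × A × X,
        ((fun j => S.G.S t.1 j) u.1 * (fun β => star (S.H.S t.2.1 β)) u.2.1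
          * (fun y => star (S.Q.S t.2.2 y)) u.2.2) *
        (∑ e, (fun j e => S.G.S (S.G.bar j) (S.k e) / S.G.S S.G.one (S.k e)) u.1 e
          * (fun β e => S.H.S β (S.δ e) / S.H.S S.H.one (S.δ e)) u.2.1 e
          * (fun y e => S.Q.S y (S.ζ e) / S.Q.S S.Q.one (S.ζ e)) u.2.2 e
          * (fun e => (S.p e : ℂ)) e) := by
      rw [Nv]
      exact Finset.sum_congr rfl fun u _ => by rw [hMv u]; rfl
    have hcon := contract3 (fun j => S.G.S t.1 j) (fun β => star (S.H.S t.2.1 β))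
      (fun y => star (S.Q.S t.2.2 y))
      (fun j e => S.G.S (S.G.bar j) (S.k e) / S.G.S S.G.one (S.k e))
      (fun β e => S.H.S β (S.δ e) / S.H.S S.H.one (S.δ e))
      (fun y e => S.Q.S y (S.ζ e) / S.Q.S S.Q.one (S.ζ e))
      (fun e => ((S.p e : ℝ) : ℂ))
    rw [h0, hcon, Complex.ofReal_sum]
    refine Finset.sum_congr rfl fun e _ => ?_
    have c1 : (∑ j, S.G.S t.1 j * (S.G.S (S.G.bar j) (S.k e) / S.G.S S.G.one (S.k e)))
        = (if t.1 = S.k e then (1:ℂ) else 0) * (S.G.S S.G.one (S.k e))⁻¹ := by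
      calc (∑ j, S.G.S t.1 j * (S.G.S (S.G.bar j) (S.k e) / S.G.S S.G.one (S.k e)))
          = ∑ j, (S.G.S t.1 j * star (S.G.S (S.k e) j)) * (S.G.S S.G.one (S.k e))⁻¹ := by
            refine Finset.sum_congr rfl fun j _ => ?_
            rw [div_eq_mul_inv, S.G.bar_row, S.G.S_symm j (S.k e)]
            ring
      _ = (∑ j, S.G.S t.1 j * star (S.G.S (S.k e) j)) * (S.G.S S.G.one (S.k e))⁻¹ :=
            (Finset.sum_mul _ _ _).symm
      _ = _ := by rw [S.G.orth t.1 (S.k e)]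
    have c2 : (∑ β, star (S.H.S t.2.1 β) * (S.H.S β (S.δ e) / S.H.S S.H.one (S.δ e)))
        = (if t.2.1 = S.δ e then (1:ℂ) else 0) * (S.H.S S.H.one (S.δ e))⁻¹ := by
      calc (∑ β, star (S.H.S t.2.1 β) * (S.H.S β (S.δ e) / S.H.S S.H.one (S.δ e)))
          = ∑ β, (star (S.H.S t.2.1 β) * S.H.S β (S.δ e)) * (S.H.S S.H.one (S.δ e))⁻¹ := by
            refine Finset.sum_congr rfl fun β _ => ?_
            rw [div_eq_mul_inv]; ring
      _ = (∑ β, star (S.H.S t.2.1 β) * S.H.S β (S.δ e)) * (S.H.S S.H.one (S.δ e))⁻¹ :=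
            (Finset.sum_mul _ _ _).symm
      _ = _ := by rw [S.H.orth' t.2.1 (S.δ e)]
    have c3 : (∑ y, star (S.Q.S t.2.2 y) * (S.Q.S y (S.ζ e) / S.Q.S S.Q.one (S.ζ e)))
        = (if t.2.2 = S.ζ e then (1:ℂ) else 0) * (S.Q.S S.Q.one (S.ζ e))⁻¹ := by
      calc (∑ y, star (S.Q.S t.2.2 y) * (S.Q.S y (S.ζ e) / S.Q.S S.Q.one (S.ζ e)))
          = ∑ y, (star (S.Q.S t.2.2 y) * S.Q.S y (S.ζ e)) * (S.Q.S S.Q.one (S.ζ e))⁻¹ := by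
            refine Finset.sum_congr rfl fun y _ => ?_
            rw [div_eq_mul_inv]; ring
      _ = (∑ y, star (S.Q.S t.2.2 y) * S.Q.S y (S.ζ e)) * (S.Q.S S.Q.one (S.ζ e))⁻¹ :=
            (Finset.sum_mul _ _ _).symm
      _ = _ := by rw [S.Q.orth' t.2.2 (S.ζ e)]
    rw [c1, c2, c3]
    by_cases h1 : t.1 = S.k e
    · by_cases h2 : t.2.1 = S.δ e
      · by_cases h3 : t.2.2 = S.ζ e
        · simp only [h1, h2, h3, if_true, and_self, one_mul]
          rw [S.G.S_one_real (S.k e), S.H.S_one_real (S.δ e), S.Q.S_one_real (S.ζ e)]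
          push_cast
          simp only [Complex.ofReal_re]
          ring
        · simp [h1, h2, h3]
      · simp [h1, h2]
    · simp [h1]

lemma star_eq (s : I × A × X) :
    Nv S s = tv S s * cc S * ∑ t, Vk S s t * (tv S t * Nv S t) := by
  have claim : ∀ u : I × A × X, Vk S s u * Mv S u
      = tv S s * (cc S * (((∑ l, (S.G.S s.1 l * (S.G.C * S.G.ω l)) * S.G.S l u.1)
        * (∑ m, (star (S.H.S s.2.1 m) * star (S.H.C * S.H.ω m)) * star (S.H.S m u.2.1))
        * (∑ n, (star (S.Q.S s.2.2 n) * star (S.Q.C * S.Q.ω n)) * star (S.Q.S n u.2.2)))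
        * Mv S u)) := by
    intro u
    have hV : Vk S s u = tv S s * ((∑ l, (S.G.S s.1 l * (S.G.C * S.G.ω l)) * S.G.S l u.1)
        * (∑ m, (star (S.H.S s.2.1 m) * star (S.H.C * S.H.ω m)) * star (S.H.S m u.2.1))
        * (∑ n, (star (S.Q.S s.2.2 n) * star (S.Q.C * S.Q.ω n)) * star (S.Q.S n u.2.2)))
        * tv S u := by
      rw [Vk, tv, tv, S.G.row_expand s.1 u.1, S.H.row_expand_star s.2.1 u.2.1,
        S.Q.row_expand_star s.2.2 u.2.2]
      ring
    rw [hV]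
    have hph := phase_lemma S u
    calc tv S s * ((∑ l, (S.G.S s.1 l * (S.G.C * S.G.ω l)) * S.G.S l u.1)
        * (∑ m, (star (S.H.S s.2.1 m) * star (S.H.C * S.H.ω m)) * star (S.H.S m u.2.1))
        * (∑ n, (star (S.Q.S s.2.2 n) * star (S.Q.C * S.Q.ω n)) * star (S.Q.S n u.2.2)))
        * tv S u * Mv S u
        = tv S s * (((∑ l, (S.G.S s.1 l * (S.G.C * S.G.ω l)) * S.G.S l u.1)
        * (∑ m, (star (S.H.S s.2.1 m) * star (S.H.C * S.H.ω m)) * star (S.H.S m u.2.1))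
        * (∑ n, (star (S.Q.S s.2.2 n) * star (S.Q.C * S.Q.ω n)) * star (S.Q.S n u.2.2)))
        * (tv S u * Mv S u)) := by ring
    _ = tv S s * (((∑ l, (S.G.S s.1 l * (S.G.C * S.G.ω l)) * S.G.S l u.1)
        * (∑ m, (star (S.H.S s.2.1 m) * star (S.H.C * S.H.ω m)) * star (S.H.S m u.2.1))
        * (∑ n, (star (S.Q.S s.2.2 n) * star (S.Q.C * S.Q.ω n)) * star (S.Q.S n u.2.2)))
        * (cc S * Mv S u)) := by rw [hph]
    _ = _ := by ring
  have step1 : Nv S s = tv S s * cc S * ∑ u : I × A × X,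
      (((∑ l, (S.G.S s.1 l * (S.G.C * S.G.ω l)) * S.G.S l u.1)
        * (∑ m, (star (S.H.S s.2.1 m) * star (S.H.C * S.H.ω m)) * star (S.H.S m u.2.1))
        * (∑ n, (star (S.Q.S s.2.2 n) * star (S.Q.C * S.Q.ω n)) * star (S.Q.S n u.2.2)))
        * Mv S u) := by
    rw [Nv, Finset.sum_congr rfl fun u _ => claim u, ← Finset.mul_sum, ← Finset.mul_sum,
      ← mul_assoc]
  rw [step1]
  have h := contract3 (fun l => S.G.S s.1 l * (S.G.C * S.G.ω l))
    (fun m => star (S.H.S s.2.1 m) * star (S.H.C * S.H.ω m))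
    (fun n => star (S.Q.S s.2.2 n) * star (S.Q.C * S.Q.ω n))
    (fun l u => S.G.S l u.1) (fun m u => star (S.H.S m u.2.1))
    (fun n u => star (S.Q.S n u.2.2)) (Mv S)
  rw [← h]
  congr 1
  refine Finset.sum_congr rfl fun t _ => ?_
  have hNt : (∑ u, S.G.S t.1 u.1 * star (S.H.S t.2.1 u.2.1) * star (S.Q.S t.2.2 u.2.2) * Mv S u)
      = Nv S t := rfl
  rw [hNt]
  rw [Vk, tv]
  ring

lemma align : (cc S)^3 = 1 ∧ ∀ t, tv S t * Nv S t = cc S * Nv S t := by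
  classical
  choose r hr using fun t => Nv_real S t
  set a : I × A × X → ℝ := fun t => (S.G.S S.G.one t.1).re * (S.H.S S.H.one t.2.1).re
    * (S.Q.S S.Q.one t.2.2).re with ha_def
  have ha_pos : ∀ t, 0 < a t := fun t =>
    mul_pos (mul_pos (S.G.S_one_pos t.1) (S.H.S_one_pos t.2.1)) (S.Q.S_one_pos t.2.2)
  have haC : ∀ t, Vk S (onev S) t = ((a t : ℝ) : ℂ) := by
    intro t
    simp only [ha_def]
    rw [Vk, onev]
    rw [S.G.S_one_real t.1, S.H.S_one_real t.2.1, S.Q.S_one_real t.2.2]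
    simp only [Complex.star_def, Complex.conj_ofReal]
    push_cast
    simp only [Complex.ofReal_re]
  have hsum1 : ∑ t, a t * r t = 1 := by
    have h1 : (∑ t, Vk S (onev S) t * Nv S t) = Mv S (barv S (onev S)) := VN_eq S (onev S)
    have h2 : barv S (onev S) = onev S := by
      simp [barv, onev, S.G.bar_one, S.H.bar_one, S.Q.bar_one]
    rw [h2] at h1
    have h3 : Mv S (onev S) = 1 := by
      show ((S.M S.G.one S.H.one S.Q.one : ℝ) : ℂ) = 1
      rw [S.M_vac, Complex.ofReal_one]
    rw [h3] at h1
    have h4 : ((∑ t, a t * r t : ℝ) : ℂ) = 1 := by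
      rw [Complex.ofReal_sum, ← h1]
      refine Finset.sum_congr rfl fun t _ => ?_
      rw [haC t, (hr t).2]
      push_cast
      ring
    exact_mod_cast h4
  have hkey : ∑ t, ((a t * r t : ℝ) : ℂ) * (cc S ^ 2 * tv S t) = 1 := by
    have h1 := star_eq S (onev S)
    rw [Nv_one, tv_one] at h1
    calc ∑ t, ((a t * r t : ℝ) : ℂ) * (cc S ^ 2 * tv S t)
        = cc S * cc S * ∑ t, Vk S (onev S) t * (tv S t * Nv S t) := by
          rw [Finset.mul_sum]
          refine Finset.sum_congr rfl fun t _ => ?_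
          rw [haC t, (hr t).2]
          push_cast
          ring
    _ = 1 := h1.symm
  have hre : ∑ t, (a t * r t) * (cc S ^ 2 * tv S t).re = 1 := by
    have := congrArg Complex.re hkey
    rw [Complex.re_sum] at this
    simpa [Complex.re_ofReal_mul] using this
  have habs : ∀ t, ‖cc S ^ 2 * tv S t‖ = 1 := by
    intro t
    rw [norm_mul, norm_pow, abs_cc, abs_tv]
    norm_num
  have hle : ∀ t, (cc S ^ 2 * tv S t).re ≤ 1 := fun t => by
    calc (cc S ^ 2 * tv S t).re ≤ ‖cc S ^ 2 * tv S t‖ := Complex.re_le_norm _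
    _ = 1 := habs t
  have hzero : ∑ t, (a t * r t) * (1 - (cc S ^ 2 * tv S t).re) = 0 := by
    rw [Finset.sum_congr rfl (fun t _ => mul_sub (a t * r t) 1 ((cc S ^ 2 * tv S t).re)),
      Finset.sum_sub_distrib]
    simp only [mul_one]
    rw [hsum1, hre]
    ring
  have hterm := (Finset.sum_eq_zero_iff_of_nonneg (fun t _ => by
    have := (hr t).1
    have := (ha_pos t).le
    have := hle t
    have h5 : (0:ℝ) ≤ a t * r t := mul_nonneg ‹0 ≤ a t› ‹0 ≤ r t›
    nlinarith)).mp hzero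
  have hsupp : ∀ t, r t ≠ 0 → cc S ^ 2 * tv S t = 1 := by
    intro t hrt
    have h6 := hterm t (Finset.mem_univ t)
    have h7 : 0 < a t * r t := mul_pos (ha_pos t) (lt_of_le_of_ne (hr t).1 (Ne.symm hrt))
    have h8 : (cc S ^ 2 * tv S t).re = 1 := by
      rcases mul_eq_zero.mp h6 with h | h
      · exact absurd h (ne_of_gt h7)
      · linarith
    exact eq_one_of_abs_re (habs t) h8
  have r1 : r (onev S) = 1 := by
    have := (hr (onev S)).2
    rw [Nv_one] at this
    exact_mod_cast this.symm
  have hc3 : cc S ^ 3 = 1 := by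
    have := hsupp (onev S) (by rw [r1]; exact one_ne_zero)
    rw [tv_one] at this
    rw [pow_succ]
    exact this
  refine ⟨hc3, fun t => ?_⟩
  by_cases hrt : r t = 0
  · have : Nv S t = 0 := by rw [(hr t).2, hrt]; norm_num
    rw [this, mul_zero, mul_zero]
  · have h9 := hsupp t hrt
    have h10 : tv S t = cc S := by
      calc tv S t = cc S ^ 3 * tv S t := by rw [hc3, one_mul]
      _ = cc S * (cc S ^ 2 * tv S t) := by ring
      _ = cc S := by rw [h9, mul_one]
    rw [h10]

lemma Nv_eq_Mbar (s : I × A × X) : Nv S s = Mv S (barv S s) := by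
  obtain ⟨hc3, htN⟩ := align S
  have h1 := star_eq S s
  rw [Finset.sum_congr rfl (fun t _ => by rw [htN t])] at h1
  have h2 : ∑ t, Vk S s t * (cc S * Nv S t) = cc S * Mv S (barv S s) := by
    rw [← VN_eq S s, Finset.mul_sum]
    exact Finset.sum_congr rfl fun t _ => by ring
  rw [h2] at h1
  have h3 := phase_lemma S (barv S s)
  rw [tv_bar] at h3
  calc Nv S s = tv S s * cc S * (cc S * Mv S (barv S s)) := h1
  _ = cc S ^ 2 * (tv S s * Mv S (barv S s)) := by ring
  _ = cc S ^ 2 * (cc S * Mv S (barv S s)) := by rw [h3]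
  _ = cc S ^ 3 * Mv S (barv S s) := by ring
  _ = Mv S (barv S s) := by rw [hc3, one_mul]

lemma starV_N (s : I × A × X) : (∑ t, star (Vk S s t) * Nv S t) = Mv S s := by
  have hrw : ∀ t : I × A × X, star (Vk S s t)
      = star (S.G.S s.1 t.1) * S.H.S s.2.1 t.2.1 * S.Q.S s.2.2 t.2.2 := by
    intro t
    rw [Vk, star_mul', star_mul', star_star, star_star]
  have h := contract3 (fun j => star (S.G.S s.1 j)) (fun β => S.H.S s.2.1 β)
    (fun y => S.Q.S s.2.2 y) (fun j u => S.G.S j u.1)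
    (fun β u => star (S.H.S β u.2.1)) (fun y u => star (S.Q.S y u.2.2)) (Mv S)
  have hL : (∑ t, star (Vk S s t) * Nv S t)
      = ∑ t : I × A × X, ((fun j => star (S.G.S s.1 j)) t.1 * (fun β => S.H.S s.2.1 β) t.2.1
          * (fun y => S.Q.S s.2.2 y) t.2.2) *
        (∑ u, (fun j u => S.G.S j u.1) t.1 u * (fun β u => star (S.H.S β u.2.1)) t.2.1 u
          * (fun y u => star (S.Q.S y u.2.2)) t.2.2 u * Mv S u) :=
    Finset.sum_congr rfl fun t _ => by rw [hrw t]; rfl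
  rw [hL, h]
  have hc : ∀ u : I × A × X,
      (∑ j, star (S.G.S s.1 j) * S.G.S j u.1) * (∑ β, S.H.S s.2.1 β * star (S.H.S β u.2.1))
        * (∑ y, S.Q.S s.2.2 y * star (S.Q.S y u.2.2)) * Mv S u
      = (if s.1 = u.1 then (1:ℂ) else 0) * (if s.2.1 = u.2.1 then 1 else 0)
        * (if s.2.2 = u.2.2 then 1 else 0) * Mv S u := by
    intro u
    rw [S.G.orth' s.1 u.1, S.H.orth'' s.2.1 u.2.1, S.Q.orth'' s.2.2 u.2.2]
  rw [Finset.sum_congr rfl fun u _ => hc u, sum_ite3' s (Mv S)]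

lemma star_Vk_bar (s t : I × A × X) : star (Vk S s (barv S t)) = Vk S s t := by
  rw [Vk, barv]
  simp only
  rw [S.G.col_bar s.1 t.1, S.H.col_bar s.2.1 t.2.1, S.Q.col_bar s.2.2 t.2.2]
  rw [star_mul', star_mul', star_star, star_star, star_star]
  rw [Vk]

lemma M_eq_N (s : I × A × X) : Mv S s = Nv S s := by
  rw [← starV_N S s]
  calc (∑ t, star (Vk S s t) * Nv S t)
      = ∑ t, star (Vk S s t) * Mv S (barv S t) :=
        Finset.sum_congr rfl fun t _ => by rw [Nv_eq_Mbar S t]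
  _ = ∑ t, star (Vk S s (barv S t)) * Mv S (barv S (barv S t)) :=
        (Function.Bijective.sum_comp (barv_involutive S).bijective
          (fun t => star (Vk S s t) * Mv S (barv S t))).symm
  _ = ∑ t, Vk S s t * Mv S t := by
        refine Finset.sum_congr rfl fun t _ => ?_
        rw [star_Vk_bar S s t, barv_involutive S t]
  _ = Nv S s := rfl

end CSSaux

/-- Proposition 3.1 (1):
`M(i,α,x) = Σ_{j,β,y} S_{ij} conj(Ṡ_{αβ}) conj(S̈_{xy}) M(j,β,y)`. -/
theorem cosetSpectralSystem_prop31_one {I A X E : Type*}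
    [Fintype I] [DecidableEq I] [Fintype A] [DecidableEq A]
    [Fintype X] [DecidableEq X] [Fintype E]
    (𝒮 : CosetSpectralSystem I A X E) (i : I) (α : A) (x : X) :
    (𝒮.M i α x : ℂ) = ∑ j, ∑ β, ∑ y,
      𝒮.G.S i j * star (𝒮.H.S α β) * star (𝒮.Q.S x y) * (𝒮.M j β y : ℂ) := by
  have h := CSSaux.M_eq_N 𝒮 (i, α, x)
  rw [CSSaux.Nv_triple] at h
  exact h
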